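/- arXiv:1805.03920 — 6 statements merged into one kernel-verified Lean document; each statement's English description precedes it below -/
import Mathlib

section
/- Let C₃ ∈ ℕ≥1 and D ∈ ℤ \ {0} with gcd(C₃, D) = 1. Fix coprime integers (u, v) with C₃·min(u², v²) > −D. If coprime positive integers (a, b) satisfy C₃ ∣ b − a and the equation a·u² − b·v² = ((b − a)/C₃)·D, then, setting k = gcd(C₃u² + D, C₃v² + D), one has a = (C₃v² + D)/k and b = (C₃u² + D)/k. -/
/-- If coprime positive `(a, b)` with `C₃ ∣ b − a` solve `a u² − b v² = ((b−a)/C₃) D`,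
then `a = (C₃ v² + D)/k` and `b = (C₃ u² + D)/k` with `k = gcd(C₃ u² + D, C₃ v² + D)`. -/
theorem pell_parametrization (C₃ : ℕ) (hC : 1 ≤ C₃) (D : ℤ) (hD : D ≠ 0)
    (hCD : Int.gcd (C₃ : ℤ) D = 1)
    (u v : ℤ) (huv : IsCoprime u v)
    (hmin : (C₃ : ℤ) * min (u ^ 2) (v ^ 2) > -D)
    (a b : ℤ) (ha : 0 < a) (hb : 0 < b) (hab : IsCoprime a b)
    (hdvd : (C₃ : ℤ) ∣ b - a)
    (heq : a * u ^ 2 - b * v ^ 2 = ((b - a) / (C₃ : ℤ)) * D) :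
    a = ((C₃ : ℤ) * v ^ 2 + D) /
        (Int.gcd ((C₃ : ℤ) * u ^ 2 + D) ((C₃ : ℤ) * v ^ 2 + D) : ℤ) ∧
    b = ((C₃ : ℤ) * u ^ 2 + D) /
        (Int.gcd ((C₃ : ℤ) * u ^ 2 + D) ((C₃ : ℤ) * v ^ 2 + D) : ℤ) := by
  set X : ℤ := (C₃ : ℤ) * u ^ 2 + D with hX
  set Y : ℤ := (C₃ : ℤ) * v ^ 2 + D with hY
  have hC' : (0 : ℤ) < (C₃ : ℤ) := by exact_mod_cast hC
  have hXpos : 0 < X := by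
    have : (C₃ : ℤ) * min (u ^ 2) (v ^ 2) ≤ (C₃ : ℤ) * u ^ 2 :=
      mul_le_mul_of_nonneg_left (min_le_left _ _) hC'.le
    linarith
  have hYpos : 0 < Y := by
    have : (C₃ : ℤ) * min (u ^ 2) (v ^ 2) ≤ (C₃ : ℤ) * v ^ 2 :=
      mul_le_mul_of_nonneg_left (min_le_right _ _) hC'.le
    linarith
  have hcancel : (C₃ : ℤ) * ((b - a) / (C₃ : ℤ)) = b - a :=
    Int.mul_ediv_cancel' hdvd
  have key : a * X = b * Y := by
    have h2 : (C₃ : ℤ) * (a * u ^ 2 - b * v ^ 2) = (C₃ : ℤ) * (((b - a) / (C₃ : ℤ)) * D) := by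
      rw [heq]
    rw [← mul_assoc, hcancel] at h2
    rw [hX, hY]; ring_nf; ring_nf at h2; linarith
  have hbX : b ∣ X := hab.symm.dvd_of_dvd_mul_left ⟨Y, key⟩
  obtain ⟨m, hm⟩ := hbX
  have hYam : Y = a * m := by
    have hb0 : b ≠ 0 := hb.ne'
    have : b * Y = b * (a * m) := by rw [← key, hm]; ring
    exact mul_left_cancel₀ hb0 this
  have hmpos : 0 < m := by
    rcases lt_trichotomy m 0 with h | h | h
    · nlinarith [hm ▸ hXpos]
    · simp [h] at hm; omega
    · exact h
  have hgcd : (Int.gcd X Y : ℤ) = m := by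
    rw [hm, hYam, mul_comm b m, mul_comm a m, Int.gcd_mul_left]
    have : Int.gcd b a = 1 := (Int.isCoprime_iff_gcd_eq_one.mp hab.symm)
    rw [this]
    simp [Int.natAbs_of_nonneg hmpos.le]
  constructor
  · rw [hgcd, hYam, Int.mul_ediv_cancel _ hmpos.ne']
  · rw [hgcd, hm, Int.mul_ediv_cancel _ hmpos.ne']
end

section
/- Let C₃ ∈ ℕ≥1 and D ∈ ℤ \ {0} with gcd(C₃, D) = 1, and let (u, v) be coprime integers with C₃·min(u², v²) > −D. Set k = gcd(C₃u² + D, C₃v² + D), a = (C₃v² + D)/k, b = (C₃u² + D)/k. Then a and b are integers, gcd(a, b) = 1, C₃ divides b − a, and a·u² − b·v² = ((b − a)/C₃)·D. -/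
/-- Converse parametrization: with `k = gcd(C₃ u² + D, C₃ v² + D)`,
`a = (C₃ v² + D)/k`, `b = (C₃ u² + D)/k`, the pair `(a, b)` consists of integers
(`k` divides both values), is coprime, satisfies `C₃ ∣ b − a` and the equation
`a u² − b v² = ((b − a)/C₃) D`. -/
theorem pell_parametrization_converse (C₃ : ℕ) (hC : 1 ≤ C₃) (D : ℤ) (hD : D ≠ 0)
    (hCD : Int.gcd (C₃ : ℤ) D = 1)
    (u v : ℤ) (huv : IsCoprime u v)
    (hmin : (C₃ : ℤ) * min (u ^ 2) (v ^ 2) > -D)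
    (k a b : ℤ)
    (hk : k = (Int.gcd ((C₃ : ℤ) * u ^ 2 + D) ((C₃ : ℤ) * v ^ 2 + D) : ℤ))
    (ha : a = ((C₃ : ℤ) * v ^ 2 + D) / k)
    (hb : b = ((C₃ : ℤ) * u ^ 2 + D) / k) :
    k ∣ (C₃ : ℤ) * v ^ 2 + D ∧ k ∣ (C₃ : ℤ) * u ^ 2 + D ∧
    IsCoprime a b ∧ (C₃ : ℤ) ∣ b - a ∧
    a * u ^ 2 - b * v ^ 2 = ((b - a) / (C₃ : ℤ)) * D := by
  have hC0 : (0:ℤ) < (C₃ : ℤ) := by exact_mod_cast hC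
  have hXpos : 0 < (C₃ : ℤ) * u ^ 2 + D := by
    have h1 : min (u ^ 2) (v ^ 2) ≤ u ^ 2 := min_le_left _ _
    nlinarith [hmin]
  have hYpos : 0 < (C₃ : ℤ) * v ^ 2 + D := by
    have h1 : min (u ^ 2) (v ^ 2) ≤ v ^ 2 := min_le_right _ _
    nlinarith [hmin]
  have hkX : k ∣ (C₃ : ℤ) * u ^ 2 + D := hk ▸ Int.gcd_dvd_left _ _
  have hkY : k ∣ (C₃ : ℤ) * v ^ 2 + D := hk ▸ Int.gcd_dvd_right _ _
  have hgpos : 0 < Int.gcd ((C₃ : ℤ) * u ^ 2 + D) ((C₃ : ℤ) * v ^ 2 + D) :=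
    Int.gcd_pos_iff.mpr (Or.inl hXpos.ne')
  have hkpos : 0 < k := by rw [hk]; exact_mod_cast hgpos
  have hk0 : k ≠ 0 := hkpos.ne'
  have hbk : b * k = (C₃ : ℤ) * u ^ 2 + D := by rw [hb]; exact Int.ediv_mul_cancel hkX
  have hak : a * k = (C₃ : ℤ) * v ^ 2 + D := by rw [ha]; exact Int.ediv_mul_cancel hkY
  -- coprimality of a and b
  have hcop : IsCoprime a b := by
    rw [Int.isCoprime_iff_gcd_eq_one, ha, hb, hk, Int.gcd_comm ((C₃ : ℤ) * u ^ 2 + D)]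
    exact Int.gcd_div_gcd_div_gcd (Int.gcd_pos_iff.mpr (Or.inl hYpos.ne'))
  -- coprimality of C₃ and k
  have hCco : IsCoprime ((C₃ : ℤ)) D := Int.isCoprime_iff_gcd_eq_one.mpr hCD
  have hCX : IsCoprime ((C₃ : ℤ)) ((C₃ : ℤ) * u ^ 2 + D) := by
    have := hCco.add_mul_left_right (u ^ 2)
    convert this using 1
    · rfl
    ring
  have hCk : IsCoprime ((C₃ : ℤ)) k := hCX.of_isCoprime_of_dvd_right hkX
  have hkdiff : k ∣ (C₃ : ℤ) * (u ^ 2 - v ^ 2) := by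
    have : k ∣ ((C₃ : ℤ) * u ^ 2 + D) - ((C₃ : ℤ) * v ^ 2 + D) := dvd_sub hkX hkY
    convert this using 1
    ring
  obtain ⟨t, ht⟩ : k ∣ u ^ 2 - v ^ 2 := hCk.symm.dvd_of_dvd_mul_left hkdiff
  have hba : b - a = (C₃ : ℤ) * t := by
    have h2 : (b - a) * k = ((C₃ : ℤ) * t) * k := by
      rw [sub_mul, hbk, hak]
      linear_combination (C₃ : ℤ) * ht
    exact mul_right_cancel₀ hk0 h2
  refine ⟨hkY, hkX, hcop, ⟨t, hba⟩, ?_⟩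
  have hdiv : (b - a) / (C₃ : ℤ) = t := by
    rw [hba, Int.mul_ediv_cancel_left _ hC0.ne']
  rw [hdiv]
  have h3 : (a * u ^ 2 - b * v ^ 2) * k = (t * D) * k := by
    linear_combination u ^ 2 * hak - v ^ 2 * hbk + D * ht
  exact mul_right_cancel₀ hk0 h3
end

section
/- Let a, b, u, v be integers with gcd(a,b) = 1 and gcd(u,v) = 1, satisfying a·u² − b·v² = (b − a)·D/C₃ with C₃ ∣ b − a and gcd(C₃W, D) = 1 for given positive integers C₃, W and nonzero integer D. Then gcd(u², b)·gcd(v², a) divides D, and gcd(u − v, b − a) divides (b − a)/C₃. -/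
/-- For solutions of `a u² − b v² = ((b−a)/C₃) D` with the stated coprimalities,
`gcd(u², b) · gcd(v², a)` divides `D` and `gcd(u − v, b − a)` divides `(b − a)/C₃`. -/
theorem divisibility_constraints (a b u v : ℤ) (C₃ W : ℕ) (hC : 0 < C₃) (hW : 0 < W)
    (D : ℤ) (hD : D ≠ 0)
    (hab : IsCoprime a b) (huv : IsCoprime u v)
    (hCWD : Int.gcd ((C₃ : ℤ) * (W : ℤ)) D = 1)
    (hdvd : (C₃ : ℤ) ∣ b - a)
    (heq : a * u ^ 2 - b * v ^ 2 = ((b - a) / (C₃ : ℤ)) * D) :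
    ((Int.gcd (u ^ 2) b : ℤ) * (Int.gcd (v ^ 2) a : ℤ)) ∣ D ∧
    (Int.gcd (u - v) (b - a) : ℤ) ∣ (b - a) / (C₃ : ℤ) := by
  set M : ℤ := (b - a) / (C₃ : ℤ) with hMdef
  have hM : (C₃ : ℤ) * M = b - a := Int.mul_ediv_cancel' hdvd
  -- coprimality of C₃ and D
  have hCD : IsCoprime ((C₃ : ℤ)) D :=
    (Int.isCoprime_iff_gcd_eq_one.mpr hCWD).of_mul_left_left
  -- b is coprime to b - a, a is coprime to b - a
  have hbba : IsCoprime b (b - a) := by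
    have := hab.symm.add_mul_left_right (-1)
    have h : a + b * (-1) = -(b - a) := by ring
    rw [h] at this
    simpa using this.neg_right
  have haba : IsCoprime a (b - a) := by
    have := hab.add_mul_left_right (-1)
    have h : b + a * (-1) = b - a := by ring
    rwa [h] at this
  -- the two gcds
  set g1 : ℤ := (Int.gcd (u ^ 2) b : ℤ)
  set g2 : ℤ := (Int.gcd (v ^ 2) a : ℤ)
  have hg1u : g1 ∣ u ^ 2 := Int.gcd_dvd_left _ _
  have hg1b : g1 ∣ b := Int.gcd_dvd_right _ _
  have hg2v : g2 ∣ v ^ 2 := Int.gcd_dvd_left _ _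
  have hg2a : g2 ∣ a := Int.gcd_dvd_right _ _
  have hg1MD : g1 ∣ M * D := by
    rw [← heq]
    exact dvd_sub (hg1u.mul_left a) (hg1b.mul_right (v ^ 2))
  have hg2MD : g2 ∣ M * D := by
    rw [← heq]
    exact dvd_sub ((hg2a.mul_right (u ^ 2))) (hg2v.mul_left b)
  have hg1g2 : IsCoprime g1 g2 :=
    ((hab.symm.of_isCoprime_of_dvd_left hg1b).of_isCoprime_of_dvd_right hg2a)
  have hg12MD : g1 * g2 ∣ M * D := hg1g2.mul_dvd hg1MD hg2MD
  have hMba : M ∣ b - a := ⟨(C₃ : ℤ), by linarith [hM]⟩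
  have hg1M : IsCoprime g1 M :=
    (hbba.of_isCoprime_of_dvd_left hg1b).of_isCoprime_of_dvd_right hMba
  have hg2M : IsCoprime g2 M :=
    (haba.of_isCoprime_of_dvd_left hg2a).of_isCoprime_of_dvd_right hMba
  have hg12M : IsCoprime (g1 * g2) M := hg1M.mul_left hg2M
  refine ⟨hg12M.dvd_of_dvd_mul_left hg12MD, ?_⟩
  -- Part 2
  set g3 : ℤ := (Int.gcd (u - v) (b - a) : ℤ)
  have hg3uv : g3 ∣ u - v := Int.gcd_dvd_left _ _
  have hg3ba : g3 ∣ b - a := Int.gcd_dvd_right _ _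
  have hg3MD : g3 ∣ M * D := by
    rw [← heq]
    have h1 : g3 ∣ u ^ 2 - v ^ 2 := by
      have : u ^ 2 - v ^ 2 = (u - v) * (u + v) := by ring
      rw [this]; exact hg3uv.mul_right _
    have : a * u ^ 2 - b * v ^ 2 = a * (u ^ 2 - v ^ 2) - (b - a) * v ^ 2 := by ring
    rw [this]
    exact dvd_sub (h1.mul_left a) (hg3ba.mul_right _)
  have hg3MC : g3 ∣ M * (C₃ : ℤ) := by
    rw [mul_comm, hM]; exact hg3ba
  have hgcd : (Int.gcd (M * D) (M * (C₃ : ℤ)) : ℤ) = (M.natAbs : ℤ) := by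
    have hDC : Int.gcd D (C₃ : ℤ) = 1 :=
      Int.isCoprime_iff_gcd_eq_one.mp hCD.symm
    rw [Int.gcd_mul_left, hDC, mul_one]
  have := Int.dvd_coe_gcd hg3MD hg3MC
  rw [hgcd] at this
  exact this.trans (Int.natAbs_dvd.mpr dvd_rfl)
end

section
/- Fix q ∈ ℕ≥1, C₃ ∈ ℕ≥1, D ∈ ℤ \ {0} with gcd(C₃, D) = 1. Let (u, v) be coprime integers with u + v > 0 and C₃·min(u², v²) > −D, and let (a, b) be the coprime pair a = (C₃v² + D)/k, b = (C₃u² + D)/k with k = gcd(C₃u² + D, C₃v² + D), and assume b > a. Then (u + v) ∣ q·k if and only if (b − a)/(C₃·q') = gcd(u − v, b − a) for some divisor q' of q, equivalently (b − a)/(C₃·gcd(u − v, b − a)) divides q. -/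
/-- Key translation: for the pair `(a,b)` parametrized by `k = gcd(C₃ u² + D, C₃ v² + D)`,
the condition `(u + v) ∣ q k` is equivalent to `(b − a)/(C₃ gcd(u − v, b − a)) ∣ q`. -/
theorem key_translation (q C₃ : ℕ) (hq : 1 ≤ q) (hC : 1 ≤ C₃) (D : ℤ) (hD : D ≠ 0)
    (hCD : Int.gcd (C₃ : ℤ) D = 1)
    (u v : ℤ) (huv : IsCoprime u v) (hsum : 0 < u + v)
    (hmin : (C₃ : ℤ) * min (u ^ 2) (v ^ 2) > -D)
    (k a b : ℤ)
    (hk : k = (Int.gcd ((C₃ : ℤ) * u ^ 2 + D) ((C₃ : ℤ) * v ^ 2 + D) : ℤ))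
    (ha : a = ((C₃ : ℤ) * v ^ 2 + D) / k)
    (hb : b = ((C₃ : ℤ) * u ^ 2 + D) / k)
    (hba : a < b) :
    (u + v) ∣ (q : ℤ) * k ↔
      (b - a) / ((C₃ : ℤ) * (Int.gcd (u - v) (b - a) : ℤ)) ∣ (q : ℤ) := by
  have hC0 : (0:ℤ) < (C₃:ℤ) := by exact_mod_cast hC
  set X := (C₃:ℤ) * u ^ 2 + D with hX
  set Y := (C₃:ℤ) * v ^ 2 + D with hY
  have hXpos : 0 < X := by
    have : (C₃:ℤ) * min (u^2) (v^2) ≤ (C₃:ℤ) * u^2 :=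
      mul_le_mul_of_nonneg_left (min_le_left _ _) hC0.le
    simp only [hX]; linarith
  have hYpos : 0 < Y := by
    have : (C₃:ℤ) * min (u^2) (v^2) ≤ (C₃:ℤ) * v^2 :=
      mul_le_mul_of_nonneg_left (min_le_right _ _) hC0.le
    simp only [hY]; linarith
  have hkX : k ∣ X := hk ▸ Int.gcd_dvd_left X Y
  have hkY : k ∣ Y := hk ▸ Int.gcd_dvd_right X Y
  have hkpos : 0 < k := by
    rw [hk]
    have : Int.gcd X Y ≠ 0 := fun h => hXpos.ne' (Int.gcd_eq_zero_iff.mp h).1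
    exact_mod_cast Nat.pos_of_ne_zero this
  have hkb : k * b = X := by rw [hb]; exact Int.mul_ediv_cancel' hkX
  have hka : k * a = Y := by rw [ha]; exact Int.mul_ediv_cancel' hkY
  have key : k * (b - a) = (C₃:ℤ) * ((u+v) * (u-v)) := by
    have hXY : X - Y = (C₃:ℤ) * ((u+v) * (u-v)) := by rw [hX, hY]; ring
    rw [mul_sub, hkb, hka, hXY]
  have hcop : IsCoprime (C₃:ℤ) k := by
    have h1 : IsCoprime (C₃:ℤ) D := Int.isCoprime_iff_gcd_eq_one.mpr hCD
    have h2 : IsCoprime (C₃:ℤ) X := by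
      rw [hX, add_comm]; exact h1.add_mul_left_right (u^2)
    exact h2.of_isCoprime_of_dvd_right hkX
  have hC3dvd : (C₃:ℤ) ∣ b - a :=
    hcop.dvd_of_dvd_mul_left (key ▸ Dvd.intro _ rfl)
  obtain ⟨m, hm⟩ := hC3dvd
  have hkm : k * m = (u+v) * (u-v) := by
    have h' : (C₃:ℤ) * (k * m) = (C₃:ℤ) * ((u+v) * (u-v)) := by
      linear_combination key - k * hm
    exact mul_left_cancel₀ hC0.ne' h'
  have ht0 : u - v ≠ 0 := by
    intro h
    have huv2 : u = v := by linarith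
    have hXY : X = Y := by rw [hX, hY, huv2]
    rw [hb, ha, hXY] at hba
    exact lt_irrefl _ hba
  have hmpos : 0 < m := by
    have h1 : 0 < (C₃:ℤ) * m := by rw [← hm]; linarith
    nlinarith
  set g : ℤ := (Int.gcd (u - v) (b - a) : ℤ) with hg
  have hgpos : 0 < g := by
    rw [hg]
    have : Int.gcd (u - v) (b - a) ≠ 0 := fun h =>
      ht0 ((Int.gcd_eq_zero_iff.mp h).1)
    exact_mod_cast Nat.pos_of_ne_zero this
  have hgt : g ∣ (u - v) := hg ▸ Int.gcd_dvd_left (u - v) (b - a)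
  have hgba : g ∣ (b - a) := hg ▸ Int.gcd_dvd_right (u - v) (b - a)
  have hgm : g ∣ m := by
    obtain ⟨x, y, hxy⟩ := hcop
    have h1 : g ∣ k * m := by rw [hkm]; exact hgt.mul_left (u+v)
    have h2 : g ∣ (C₃:ℤ) * m := hm ▸ hgba
    have hmeq : m = x * ((C₃:ℤ)*m) + y * (k*m) := by
      calc m = (x * (C₃:ℤ) + y * k) * m := by rw [hxy, one_mul]
        _ = x * ((C₃:ℤ)*m) + y * (k*m) := by ring
    rw [hmeq]; exact dvd_add (h2.mul_left x) (h1.mul_left y)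
  obtain ⟨m', hm'⟩ := hgm
  have hdiv : (b - a) / ((C₃:ℤ) * g) = m' := by
    rw [hm, hm', ← mul_assoc]
    exact Int.mul_ediv_cancel_left _ (by positivity)
  rw [hdiv]
  have hbez : g = (u-v) * Int.gcdA (u-v) (b-a) + (b-a) * Int.gcdB (u-v) (b-a) := by
    rw [hg]; exact Int.gcd_eq_gcd_ab _ _
  constructor
  · intro hs
    have h1 : (u+v)*(u-v) ∣ (q:ℤ)*k*(u-v) := mul_dvd_mul_right hs _
    rw [← hkm] at h1
    have h2 : m ∣ (q:ℤ)*(u-v) := by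
      have h1' : k * m ∣ k * ((q:ℤ)*(u-v)) := by
        rwa [show k * ((q:ℤ)*(u-v)) = (q:ℤ)*k*(u-v) by ring]
      exact (mul_dvd_mul_iff_left hkpos.ne').mp h1'
    have hmd : m ∣ b - a := ⟨(C₃:ℤ), by linarith [hm]⟩
    have h3 : m ∣ (q:ℤ) * g := by
      rw [hbez]
      rw [show (q:ℤ) * ((u-v) * Int.gcdA (u-v) (b-a) + (b-a) * Int.gcdB (u-v) (b-a))
        = ((q:ℤ)*(u-v)) * Int.gcdA (u-v) (b-a) + (b-a) * ((q:ℤ) * Int.gcdB (u-v) (b-a)) by ring]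
      exact dvd_add (h2.mul_right _) (hmd.mul_right _)
    have h4 : g * m' ∣ g * (q:ℤ) := by
      rw [← hm', mul_comm g (q:ℤ)]; exact h3
    exact (mul_dvd_mul_iff_left hgpos.ne').mp h4
  · intro hq'
    have h3 : m ∣ (q:ℤ) * g := by
      rw [hm']
      rw [show (q:ℤ) * g = g * (q:ℤ) by ring]
      exact mul_dvd_mul_left g hq'
    have h2 : m ∣ (q:ℤ)*(u-v) := by
      obtain ⟨c, hc⟩ := hgt
      have : (q:ℤ) * g ∣ (q:ℤ) * (u - v) := by
        rw [hc]; exact ⟨c, by ring⟩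
      exact h3.trans this
    have h1 : k * m ∣ k * ((q:ℤ)*(u-v)) := mul_dvd_mul_left k h2
    rw [hkm] at h1
    have h1' : (u+v) * (u-v) ∣ ((q:ℤ)*k) * (u-v) := by
      rwa [show ((q:ℤ)*k) * (u-v) = k * ((q:ℤ)*(u-v)) by ring]
    exact (mul_dvd_mul_iff_right ht0).mp h1'
end

section
/- On the surface Y₃ (blow-up of ℙ¹×ℙ¹ at the three torus-invariant points P₁ = [1:0]×[1:0], P₂ = [0:1]×[1:0], P₃ = [1:0]×[0:1]), with anticanonical height H(P) = max(|x²st|,|y²st|,|t²xy|,|s²xy|,|xyst|,|y²t²|)/gcd(...) for P = [x:y]×[s:t] in coprime coordinates, and distance d(P) = max(|x/y − 1|, |s/t − 1|) to Q = [1:1]×[1:1]: for every rational point P ≠ Q with s ≠ t one has H(P)·d(P)² ≥ 1. -/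
/-- On `Y₃`, with anticanonical height `H(P)` (maximum of the six monomials divided by
their gcd) and distance `d(P) = max(|x/y − 1|, |s/t − 1|)` to `Q = [1:1]×[1:1]`:
every rational point with `s ≠ t` satisfies `H(P) d(P)² ≥ 1`. -/
theorem height_distance_lower_bound (x y s t : ℤ)
    (hxy : IsCoprime x y) (hst : IsCoprime s t)
    (hy : y ≠ 0) (ht : t ≠ 0) (hs : s ≠ t) :
    (1 : ℝ) ≤
      (((max (max (max |x ^ 2 * s * t| |y ^ 2 * s * t|)
              (max |t ^ 2 * x * y| |s ^ 2 * x * y|))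
            (max |x * y * s * t| |y ^ 2 * t ^ 2|) : ℤ) : ℝ) /
          ((Int.gcd (x ^ 2 * s * t)
              ((Int.gcd (y ^ 2 * s * t)
                ((Int.gcd (t ^ 2 * x * y)
                  ((Int.gcd (s ^ 2 * x * y)
                    ((Int.gcd (x * y * s * t) (y ^ 2 * t ^ 2) : ℤ)) : ℕ) : ℤ) : ℕ) : ℤ) : ℕ) : ℤ) : ℕ) : ℝ)) *
        (max |(x : ℝ) / (y : ℝ) - 1| |(s : ℝ) / (t : ℝ) - 1|) ^ 2 := by
  have ht' : (t : ℝ) ≠ 0 := Int.cast_ne_zero.mpr ht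
  set G1 : ℕ := Int.gcd (x * y * s * t) (y ^ 2 * t ^ 2) with hG1
  set G2 : ℕ := Int.gcd (s ^ 2 * x * y) (G1 : ℤ) with hG2
  set G3 : ℕ := Int.gcd (t ^ 2 * x * y) (G2 : ℤ) with hG3
  set G4 : ℕ := Int.gcd (y ^ 2 * s * t) (G3 : ℤ) with hG4
  set G : ℕ := Int.gcd (x ^ 2 * s * t) (G4 : ℤ) with hGdef
  set M : ℤ := max (max (max |x ^ 2 * s * t| |y ^ 2 * s * t|)
              (max |t ^ 2 * x * y| |s ^ 2 * x * y|))
            (max |x * y * s * t| |y ^ 2 * t ^ 2|) with hMdef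
  set d : ℝ := max |(x : ℝ) / (y : ℝ) - 1| |(s : ℝ) / (t : ℝ) - 1| with hddef
  -- divisibility facts
  have h54 : (G : ℤ) ∣ (G4 : ℤ) := Int.gcd_dvd_right _ _
  have h43 : (G : ℤ) ∣ (G3 : ℤ) := h54.trans (Int.gcd_dvd_right _ _)
  have h32 : (G : ℤ) ∣ (G2 : ℤ) := h43.trans (Int.gcd_dvd_right _ _)
  have h21 : (G : ℤ) ∣ (G1 : ℤ) := h32.trans (Int.gcd_dvd_right _ _)
  have dvdA : (G : ℤ) ∣ y ^ 2 * s * t := h54.trans (Int.gcd_dvd_left _ _)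
  have dvdB : (G : ℤ) ∣ t ^ 2 * x * y := h43.trans (Int.gcd_dvd_left _ _)
  have dvdC : (G : ℤ) ∣ s ^ 2 * x * y := h32.trans (Int.gcd_dvd_left _ _)
  have dvdD : (G : ℤ) ∣ x * y * s * t := h21.trans (Int.gcd_dvd_left _ _)
  have dvdE : (G : ℤ) ∣ y ^ 2 * t ^ 2 := h21.trans (Int.gcd_dvd_right _ _)
  have hyt : y ^ 2 * t ^ 2 ≠ 0 := mul_ne_zero (pow_ne_zero _ hy) (pow_ne_zero _ ht)
  have hGne : G ≠ 0 := by
    intro h0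
    rw [h0] at dvdE
    exact hyt (zero_dvd_iff.mp (by exact_mod_cast dvdE))
  have hGpos : (0 : ℤ) < (G : ℤ) := by exact_mod_cast Nat.pos_of_ne_zero hGne
  have hGpos' : (0 : ℝ) < ((G : ℤ) : ℝ) := by exact_mod_cast hGpos
  have hd0 : (0 : ℝ) ≤ d := le_trans (abs_nonneg _) (le_max_left _ _)
  rw [div_mul_eq_mul_div, le_div_iff₀ (by exact_mod_cast hGpos'), one_mul]
  -- now goal : (G : ℝ) ≤ M * d ^ 2
  rcases eq_or_ne x 0 with hx | hx
  · -- x = 0 case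
    subst hx
    have hu : IsUnit y := isCoprime_zero_left.mp hxy
    have hy2 : y ^ 2 = 1 := Int.isUnit_sq hu
    rw [hy2, one_mul] at dvdA dvdE
    have hGst : (G : ℤ) ∣ (Int.gcd (s * t) (t ^ 2) : ℤ) := by exact_mod_cast Int.dvd_gcd dvdA dvdE
    have hgcd : Int.gcd (s * t) (t ^ 2) = t.natAbs := by
      rw [sq, Int.gcd_mul_right, Int.isCoprime_iff_gcd_eq_one.mp hst, one_mul]
    rw [hgcd] at hGst
    have hGt : (G : ℤ) ≤ |t| := by
      refine Int.le_of_dvd (abs_pos.mpr ht) ?_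
      rwa [Int.abs_eq_natAbs]
    have ht2 : |t| ≤ t ^ 2 := by nlinarith [Int.one_le_abs ht, sq_abs t, abs_nonneg t]
    have hMb : t ^ 2 ≤ M := by
      have : t ^ 2 ≤ |y ^ 2 * t ^ 2| := by rw [hy2, one_mul]; exact le_abs_self _
      exact this.trans ((le_max_right _ _).trans (le_max_right _ _))
    have hd1 : (1 : ℝ) ≤ d := by
      have : |(0 : ℝ) / (y : ℝ) - 1| = 1 := by norm_num
      calc (1 : ℝ) = |(0 : ℝ) / (y : ℝ) - 1| := this.symm
        _ ≤ d := by rw [hddef]; push_cast; exact le_max_left _ _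
    have hGM : ((G : ℤ) : ℝ) ≤ (M : ℝ) := by
      exact_mod_cast (hGt.trans ht2).trans hMb
    have hM0 : (0 : ℝ) ≤ (M : ℝ) := le_trans hGpos'.le hGM
    have hd2 : (1 : ℝ) ≤ d ^ 2 := by nlinarith
    calc ((G : ℤ) : ℝ) ≤ (M : ℝ) := hGM
      _ = (M : ℝ) * 1 := (mul_one _).symm
      _ ≤ (M : ℝ) * d ^ 2 := mul_le_mul_of_nonneg_left hd2 hM0
  · -- x ≠ 0 case
    have hdvd : (G : ℤ) ∣ x * y * (s - t) ^ 2 := by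
      have hid : x * y * (s - t) ^ 2 = s ^ 2 * x * y - 2 * (x * y * s * t) + t ^ 2 * x * y := by
        ring
      rw [hid]
      exact dvd_add (dvd_sub dvdC (dvdD.mul_left 2)) dvdB
    have hne : x * y * (s - t) ^ 2 ≠ 0 :=
      mul_ne_zero (mul_ne_zero hx hy) (pow_ne_zero _ (sub_ne_zero.mpr hs))
    have hle : (G : ℤ) ≤ |x * y * (s - t) ^ 2| :=
      Int.le_of_dvd (abs_pos.mpr hne) ((dvd_abs _ _).mpr hdvd)
    have hMt : ((|t ^ 2 * x * y| : ℤ) : ℝ) ≤ (M : ℝ) := by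
      exact_mod_cast ((le_max_left _ _).trans (le_max_right _ _)).trans (le_max_left _ _)
    have hM0 : (0 : ℝ) ≤ (M : ℝ) := le_trans (by positivity) hMt
    have hdb : |(s : ℝ) / (t : ℝ) - 1| ≤ d := le_max_right _ _
    have hdsq : ((s : ℝ) / (t : ℝ) - 1) ^ 2 ≤ d ^ 2 := by
      rw [← sq_abs]
      exact pow_le_pow_left₀ (abs_nonneg _) hdb 2
    have hid : ((|x * y * (s - t) ^ 2| : ℤ) : ℝ) =
        ((|t ^ 2 * x * y| : ℤ) : ℝ) * ((s : ℝ) / (t : ℝ) - 1) ^ 2 := by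
      push_cast
      have h1 : ((s : ℝ) / (t : ℝ) - 1) = ((s : ℝ) - (t : ℝ)) / t := by field_simp
      rw [h1, div_pow, mul_div_assoc', eq_div_iff (pow_ne_zero 2 ht')]
      simp only [abs_mul, abs_pow, sq_abs]
      ring
    calc ((G : ℤ) : ℝ) ≤ ((|x * y * (s - t) ^ 2| : ℤ) : ℝ) := by exact_mod_cast hle
      _ = ((|t ^ 2 * x * y| : ℤ) : ℝ) * ((s : ℝ) / (t : ℝ) - 1) ^ 2 := hid
      _ ≤ (M : ℝ) * d ^ 2 := by
          apply mul_le_mul hMt hdsq (sq_nonneg _) hM0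
end

section
/- Let x, y, s, t be integers with gcd(x,y) = gcd(s,t) = 1. Then gcd(x²st, y²st, t²xy, s²xy, xyst, y²t²) = gcd(x,t)·gcd(y,s)·gcd(y,t). -/
open Nat

lemma key_nat (X Y S T : ℕ) (hXY : Nat.Coprime X Y) (hST : Nat.Coprime S T) :
    Nat.gcd (X^2*S*T) (Nat.gcd (Y^2*S*T) (Nat.gcd (T^2*X*Y) (Nat.gcd (S^2*X*Y)
      (Nat.gcd (X*Y*S*T) (Y^2*T^2))))) = Nat.gcd X T * Nat.gcd Y S * Nat.gcd Y T := by
  set a := Nat.gcd X T with ha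
  set b := Nat.gcd Y S with hb
  set c := Nat.gcd Y T with hc
  set p := Nat.gcd X S with hp
  have haX : a ∣ X := Nat.gcd_dvd_left X T
  have haT : a ∣ T := Nat.gcd_dvd_right X T
  have hbY : b ∣ Y := Nat.gcd_dvd_left Y S
  have hbS : b ∣ S := Nat.gcd_dvd_right Y S
  have hcY : c ∣ Y := Nat.gcd_dvd_left Y T
  have hcT : c ∣ T := Nat.gcd_dvd_right Y T
  have hpX : p ∣ X := Nat.gcd_dvd_left X S
  have hpS : p ∣ S := Nat.gcd_dvd_right X S
  have hac : Nat.Coprime a c :=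
    Nat.Coprime.coprime_dvd_left haX (Nat.Coprime.coprime_dvd_right hcY hXY)
  have hbc : Nat.Coprime b c :=
    Nat.Coprime.coprime_dvd_left hbS (Nat.Coprime.coprime_dvd_right hcT hST)
  have hpn : Nat.Coprime p (Y^2*T^2) :=
    Nat.Coprime.mul_right
      ((Nat.Coprime.coprime_dvd_left hpX hXY).pow_right 2)
      ((Nat.Coprime.coprime_dvd_left hpS hST).pow_right 2)
  have habc : a * b * c ∣ Y^2*T^2 := by
    have hacT : a * c ∣ T := hac.mul_dvd_of_dvd_of_dvd haT hcT
    have : b * (a * c) ∣ Y * T := mul_dvd_mul hbY hacT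
    calc a * b * c = b * (a * c) := by ring
    _ ∣ Y * T := this
    _ ∣ Y^2*T^2 := ⟨Y*T, by ring⟩
  -- the reduced gcd
  have e1 : Nat.gcd (S*T) (X*Y) = p * (a * (b * c)) := by
    rw [Nat.gcd_comm, Nat.Coprime.gcd_mul _ hST, Nat.gcd_comm (X*Y) S,
      Nat.gcd_comm (X*Y) T, Nat.Coprime.gcd_mul _ hXY, Nat.Coprime.gcd_mul _ hXY,
      Nat.gcd_comm S X, Nat.gcd_comm S Y, Nat.gcd_comm T X, Nat.gcd_comm T Y]
    ring
  have eM : Nat.gcd (Nat.gcd (S*T) (X*Y)) (Y^2*T^2) = a * b * c := by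
    rw [e1, Nat.Coprime.gcd_mul_left_cancel _ hpn, ← mul_assoc,
      Nat.gcd_eq_left habc]
  apply Nat.dvd_antisymm
  · -- LHS ∣ a*b*c
    set G := Nat.gcd (X^2*S*T) (Nat.gcd (Y^2*S*T) (Nat.gcd (T^2*X*Y) (Nat.gcd (S^2*X*Y)
      (Nat.gcd (X*Y*S*T) (Y^2*T^2))))) with hG
    have g1 : G ∣ X^2*S*T := Nat.gcd_dvd_left _ _
    have g2 : G ∣ Y^2*S*T := (Nat.gcd_dvd_right _ _).trans (Nat.gcd_dvd_left _ _)
    have g3 : G ∣ T^2*X*Y := ((Nat.gcd_dvd_right _ _).trans (Nat.gcd_dvd_right _ _)).trans (Nat.gcd_dvd_left _ _)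
    have g4 : G ∣ S^2*X*Y := (((Nat.gcd_dvd_right _ _).trans (Nat.gcd_dvd_right _ _)).trans (Nat.gcd_dvd_right _ _)).trans (Nat.gcd_dvd_left _ _)
    have g6 : G ∣ Y^2*T^2 := ((((Nat.gcd_dvd_right _ _).trans (Nat.gcd_dvd_right _ _)).trans (Nat.gcd_dvd_right _ _)).trans (Nat.gcd_dvd_right _ _)).trans (Nat.gcd_dvd_right _ _)
    have hST' : G ∣ S*T := by
      have := Nat.dvd_gcd g1 g2
      rwa [show X^2*S*T = X^2*(S*T) by ring, show Y^2*S*T = Y^2*(S*T) by ring,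
        Nat.gcd_mul_right, (Nat.Coprime.pow 2 2 hXY : Nat.gcd _ _ = 1), one_mul] at this
    have hXY' : G ∣ X*Y := by
      have := Nat.dvd_gcd g3 g4
      rwa [show T^2*X*Y = T^2*(X*Y) by ring, show S^2*X*Y = S^2*(X*Y) by ring,
        Nat.gcd_mul_right, (Nat.Coprime.pow 2 2 hST.symm : Nat.gcd _ _ = 1), one_mul] at this
    have : G ∣ Nat.gcd (Nat.gcd (S*T) (X*Y)) (Y^2*T^2) :=
      Nat.dvd_gcd (Nat.dvd_gcd hST' hXY') g6
    rwa [eM] at this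
  · -- a*b*c ∣ each of six
    have hd1 : a*b*c ∣ X^2*S*T := by
      calc a*b*c ∣ (X*S*T) := by
            have : a*b ∣ X*S := mul_dvd_mul haX hbS
            have := mul_dvd_mul this hcT
            simpa using this
      _ ∣ X^2*S*T := ⟨X, by ring⟩
    have hd2 : a*b*c ∣ Y^2*S*T := by
      have hbcY : b * c ∣ Y := hbc.mul_dvd_of_dvd_of_dvd hbY hcY
      calc a*b*c = b*c*a := by ring
      _ ∣ Y*T := mul_dvd_mul hbcY haT
      _ ∣ Y^2*S*T := ⟨Y*S, by ring⟩
    have hd3 : a*b*c ∣ T^2*X*Y := by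
      have hacT : a * c ∣ T := hac.mul_dvd_of_dvd_of_dvd haT hcT
      calc a*b*c = a*c*b := by ring
      _ ∣ T*Y := mul_dvd_mul hacT hbY
      _ ∣ T^2*X*Y := ⟨T*X, by ring⟩
    have hd4 : a*b*c ∣ S^2*X*Y := by
      calc a*b*c = b*(a*c) := by ring
      _ ∣ S*(X*Y) := mul_dvd_mul hbS (mul_dvd_mul haX hcY)
      _ ∣ S^2*X*Y := ⟨S, by ring⟩
    have hd5 : a*b*c ∣ X*Y*S*T := by
      calc a*b*c ∣ X*Y*T := mul_dvd_mul (mul_dvd_mul haX hbY) hcT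
      _ ∣ X*Y*S*T := ⟨S, by ring⟩
    have hd6 : a*b*c ∣ Y^2*T^2 := habc
    exact Nat.dvd_gcd hd1 (Nat.dvd_gcd hd2 (Nat.dvd_gcd hd3 (Nat.dvd_gcd hd4 (Nat.dvd_gcd hd5 hd6))))

/-- For `gcd(x,y) = gcd(s,t) = 1`:
`gcd(x²st, y²st, t²xy, s²xy, xyst, y²t²) = gcd(x,t)·gcd(y,s)·gcd(y,t)`. -/
theorem gcd_of_six_sections (x y s t : ℤ) (hxy : IsCoprime x y) (hst : IsCoprime s t) :
    Int.gcd (x ^ 2 * s * t)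
        ((Int.gcd (y ^ 2 * s * t)
          ((Int.gcd (t ^ 2 * x * y)
            ((Int.gcd (s ^ 2 * x * y)
              ((Int.gcd (x * y * s * t) (y ^ 2 * t ^ 2) : ℤ)) : ℕ) : ℤ) : ℕ) : ℤ) : ℕ) : ℤ) =
      Int.gcd x t * Int.gcd y s * Int.gcd y t := by
  have hxy' : Nat.Coprime x.natAbs y.natAbs := Int.isCoprime_iff_gcd_eq_one.mp hxy
  have hst' : Nat.Coprime s.natAbs t.natAbs := Int.isCoprime_iff_gcd_eq_one.mp hst
  have := key_nat x.natAbs y.natAbs s.natAbs t.natAbs hxy' hst'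
  simpa [Int.gcd, Int.natAbs_mul, Int.natAbs_pow, mul_pow] using this
end
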